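/- Width-sum bound: let d ≥ 1 and β > 0, and suppose w_1 ≥ w_2 ≥ ... ≥ w_T is a nonincreasing sequence in [0,1] such that for every t and every ε > 0, w_t > ε implies t ≤ (3β/ε² + 1)·d. Then ∑_{t=1}^T w_t ≤ d + 2√(3βdT) + T·ε₀ for any ε₀ ≥ 0 such that terms with w_t ≤ ε₀ are separately bounded; in particular, ∑_{t: w_t > ε₀} w_t ≤ d + 2√(3βdT). -/

import Mathlib

lemma sqrt_helper1 (A c : ℝ) (hA : 0 ≤ A) (hc0 : 0 ≤ c) (hc1 : c < 1) :
    min 1 (Real.sqrt (A / (1 - c))) ≤ c + Real.sqrt A := by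
  have h1c : (0:ℝ) < 1 - c := by linarith
  set s := Real.sqrt (1 - c) with hs
  have hs0 : 0 < s := Real.sqrt_pos.mpr h1c
  have hs2 : s ^ 2 = 1 - c := Real.sq_sqrt h1c.le
  have hs1 : s ≤ 1 := by nlinarith
  set a := Real.sqrt A with ha
  have ha0 : 0 ≤ a := Real.sqrt_nonneg A
  have ha2 : a ^ 2 = A := Real.sq_sqrt hA
  have hdiv : Real.sqrt (A / (1 - c)) = a / s := by rw [Real.sqrt_div hA]
  rcases le_or_gt s a with h | h
  · refine le_trans (min_le_left _ _) ?_
    nlinarith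
  · refine le_trans (min_le_right _ _) ?_
    rw [hdiv, div_le_iff₀ hs0]
    nlinarith [mul_nonneg (by linarith : (0:ℝ) ≤ 1 - s) (by linarith : (0:ℝ) ≤ s - a),
      mul_nonneg (mul_self_nonneg s) (by linarith : (0:ℝ) ≤ 1 - s)]

lemma sqrt_helper2 (x : ℝ) (hx : 0 ≤ x) :
    1 / Real.sqrt (x + 1) ≤ 2 * (Real.sqrt (x + 1) - Real.sqrt x) := by
  have ha : 0 < Real.sqrt (x + 1) := Real.sqrt_pos.mpr (by linarith)
  have hb : 0 ≤ Real.sqrt x := Real.sqrt_nonneg x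
  have ha2 : Real.sqrt (x + 1) ^ 2 = x + 1 := Real.sq_sqrt (by linarith)
  have hb2 : Real.sqrt x ^ 2 = x := Real.sq_sqrt hx
  rw [div_le_iff₀ ha]
  nlinarith [sq_nonneg (Real.sqrt (x + 1) - Real.sqrt x)]

set_option maxHeartbeats 1000000 in
theorem stmt15 (d β : ℝ) (hd : 1 ≤ d) (hβ : 0 < β) (T : ℕ)
    (w : ℕ → ℝ)
    (hw01 : ∀ t ∈ Finset.Icc 1 T, w t ∈ Set.Icc (0 : ℝ) 1)
    (hmono : ∀ s t : ℕ, 1 ≤ s → s ≤ t → t ≤ T → w t ≤ w s)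
    (hkey : ∀ t ∈ Finset.Icc 1 T, ∀ ε : ℝ, 0 < ε → ε < w t →
      (t : ℝ) ≤ (3 * β / ε ^ 2 + 1) * d)
    (ε₀ : ℝ) (hε₀ : 0 ≤ ε₀) :
    (∑ t ∈ Finset.Icc 1 T, w t ≤
      d + 2 * Real.sqrt (3 * β * d * T) + T * ε₀) ∧
    (∑ t ∈ (Finset.Icc 1 T).filter (fun t => ε₀ < w t), w t ≤
      d + 2 * Real.sqrt (3 * β * d * T)) := by
  set A : ℝ := 3 * β * d with hAdef
  have hA : 0 ≤ A := by positivity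
  set sA : ℝ := Real.sqrt A with hsA
  have hsA0 : 0 ≤ sA := Real.sqrt_nonneg A
  set k : ℕ := ⌊d⌋₊ with hk
  have hk1 : 1 ≤ k := Nat.le_floor (by exact_mod_cast hd)
  have hkd : (k : ℝ) ≤ d := Nat.floor_le (by linarith)
  have hdk : d < (k : ℝ) + 1 := Nat.lt_floor_add_one d
  set c : ℝ := d - k with hc
  have hc0 : 0 ≤ c := by simp [hc]; linarith
  have hc1 : c < 1 := by simp [hc]; linarith
  -- quadratic bound
  have hquad : ∀ t ∈ Finset.Icc 1 T, 0 < w t → d < (t : ℝ) →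
      w t ≤ Real.sqrt (A / ((t : ℝ) - d)) := by
    intro t ht hw hdt
    have htd : 0 < (t : ℝ) - d := by linarith
    rw [Real.le_sqrt hw.le (div_nonneg hA htd.le), le_div_iff₀ htd]
    by_contra hcon
    push_neg at hcon
    set r := Real.sqrt (A / ((t : ℝ) - d)) with hr
    have hr0 : 0 ≤ r := Real.sqrt_nonneg _
    have hr2 : r ^ 2 = A / ((t : ℝ) - d) := Real.sq_sqrt (div_nonneg hA htd.le)
    have hrw : r < w t := by nlinarith [(div_lt_iff₀ htd).mpr hcon]
    set ε := (r + w t) / 2 with hε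
    have hε0 : 0 < ε := by simp [hε]; linarith
    have hεw : ε < w t := by simp [hε]; linarith
    have hεr : r < ε := by simp [hε]; linarith
    have hkt := hkey t ht ε hε0 hεw
    have hε2 : A / ((t : ℝ) - d) < ε ^ 2 := by nlinarith
    have heq : (3 * β / ε ^ 2 + 1) * d = A / ε ^ 2 + d := by
      field_simp; ring
    rw [heq] at hkt
    have h5 : ((t : ℝ) - d) * ε ^ 2 ≤ A := by
      rw [← le_div_iff₀ (by positivity : (0:ℝ) < ε ^ 2)]; linarith
    have h6 : A < ε ^ 2 * ((t:ℝ) - d) := (div_lt_iff₀ htd).mp hε2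
    nlinarith
  -- the bounding function
  set b : ℕ → ℝ := fun t => if d < (t : ℝ) then min 1 (Real.sqrt (A / ((t : ℝ) - d))) else 1
    with hb
  have hb1 : ∀ t, b t ≤ 1 := by
    intro t; simp only [hb]; split
    · exact min_le_left _ _
    · exact le_rfl
  have hb0 : ∀ t, 0 ≤ b t := by
    intro t; simp only [hb]; split
    · exact le_min zero_le_one (Real.sqrt_nonneg _)
    · exact zero_le_one
  have hwb : ∀ t ∈ Finset.Icc 1 T, 0 < w t → w t ≤ b t := by
    intro t ht hw
    simp only [hb]; split
    · exact le_min (hw01 t ht).2 (hquad t ht hw (by assumption))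
    · exact (hw01 t ht).2
  -- RHS function
  set R : ℕ → ℝ := fun n => min (n : ℝ) (k : ℝ)
      + (if k + 1 ≤ n then c + sA else 0)
      + (if k + 2 ≤ n then min 1 sA - 2 * sA else 0)
      + 2 * sA * Real.sqrt ((n - (k + 1) : ℕ)) with hR
  have L1 : ∀ n : ℕ, ∑ t ∈ Finset.Icc 1 n, b t ≤ R n := by
    intro n
    induction n with
    | zero => simp [hR]
    | succ n ih =>
      rw [Finset.sum_Icc_succ_top (Nat.le_add_left 1 n) b]
      have key : R n + b (n + 1) ≤ R (n + 1) := by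
        rcases lt_or_ge n k with hnk | hnk
        · -- n + 1 ≤ k
          have e1 : min ((n:ℝ)+1) (k:ℝ) = (n:ℝ)+1 := min_eq_left (by exact_mod_cast hnk)
          have e2 : min ((n:ℝ)) (k:ℝ) = (n:ℝ) := min_eq_left (by exact_mod_cast hnk.le)
          simp only [hR, Nat.cast_add, Nat.cast_one, e1, e2,
            if_neg (by omega : ¬ k + 1 ≤ n + 1), if_neg (by omega : ¬ k + 1 ≤ n),
            if_neg (by omega : ¬ k + 2 ≤ n + 1), if_neg (by omega : ¬ k + 2 ≤ n),
            Nat.sub_eq_zero_of_le (by omega : n + 1 ≤ k + 1),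
            Nat.sub_eq_zero_of_le (by omega : n ≤ k + 1)]
          have := hb1 (n + 1)
          simp only [Nat.cast_zero, Real.sqrt_zero]
          linarith
        · have e2 : min ((n:ℝ)) (k:ℝ) = (k:ℝ) := min_eq_right (by exact_mod_cast hnk)
          have e1 : min ((n:ℝ)+1) (k:ℝ) = (k:ℝ) := min_eq_right (by
            have : (k:ℝ) ≤ (n:ℝ) := by exact_mod_cast hnk
            linarith)
          rcases eq_or_lt_of_le hnk with hnk2 | hnk2
          · -- n = k : new term t = k+1
            subst hnk2
            simp only [hR, Nat.cast_add, Nat.cast_one, e1, e2,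
              if_pos (le_refl (k+1)), if_neg (by omega : ¬ k + 1 ≤ k),
              if_neg (by omega : ¬ k + 2 ≤ k + 1), if_neg (by omega : ¬ k + 2 ≤ k),
              Nat.sub_self, Nat.sub_eq_zero_of_le (by omega : k ≤ k + 1)]
            simp only [Nat.cast_zero, Real.sqrt_zero]
            push_cast at e1 e2
            have hbk : b (k + 1) ≤ c + sA := by
              have hdlt : d < ((k:ℕ) + 1 : ℕ) := by push_cast; linarith
              have : b (k + 1) = min 1 (Real.sqrt (A / (1 - c))) := by
                simp only [hb, if_pos (by push_cast; push_cast at hdlt; linarith : d < (((k+1):ℕ):ℝ))]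
                congr 2
                push_cast
                ring
              rw [this]
              exact sqrt_helper1 A c hA hc0 hc1
            linarith [e1, e2]
          · rcases eq_or_lt_of_le (Nat.succ_le_of_lt hnk2) with hnk3 | hnk3
            · -- n = k + 1 : new term t = k+2
              have hnk3' : n = k + 1 := hnk3.symm
              subst hnk3'
              simp only [hR, Nat.cast_add, Nat.cast_one, e1, e2,
                if_pos (by omega : k + 1 ≤ k + 1 + 1), if_pos (by omega : k + 1 ≤ k + 1),
                if_pos (by omega : k + 2 ≤ k + 1 + 1), if_neg (by omega : ¬ k + 2 ≤ k + 1),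
                Nat.sub_self, (by omega : k + 1 + 1 - (k + 1) = 1)]
              simp only [Nat.cast_zero, Nat.cast_one, Real.sqrt_zero, Real.sqrt_one]
              have hbk : b (k + 2) ≤ min 1 sA := by
                have hdlt : d < (((k+2):ℕ):ℝ) := by push_cast; linarith
                simp only [hb, if_pos hdlt]
                refine min_le_min le_rfl (Real.sqrt_le_sqrt ?_)
                have h1 : (1:ℝ) ≤ (((k+2):ℕ):ℝ) - d := by push_cast; linarith
                calc A / ((((k+2):ℕ):ℝ) - d) ≤ A / 1 := by
                      apply div_le_div_of_nonneg_left hA (by linarith) h1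
                  _ = A := div_one A
              have hbb : b (k + 1 + 1) = b (k + 2) := by norm_num
              rw [hbb]
              push_cast at e1 e2
              linarith [e1, e2]
            · -- n ≥ k + 2 : new term t = n + 1 ≥ k + 3
              have hn2 : k + 2 ≤ n := hnk3
              simp only [hR, Nat.cast_add, Nat.cast_one, e1, e2,
                if_pos (by omega : k + 1 ≤ n + 1), if_pos (by omega : k + 1 ≤ n),
                if_pos (by omega : k + 2 ≤ n + 1), if_pos (by omega : k + 2 ≤ n)]
              have hsub : (n + 1 - (k + 1) : ℕ) = (n - (k + 1) : ℕ) + 1 := by omega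
              rw [hsub]
              set u : ℕ := n - (k + 1) with hu
              have hu1 : 1 ≤ u := by omega
              have hbn : b (n + 1) ≤ 2 * sA * (Real.sqrt ((u:ℝ) + 1) - Real.sqrt u) := by
                have hdlt : d < ((n+1:ℕ):ℝ) := by
                  push_cast
                  have : (k:ℝ) + 2 ≤ n := by exact_mod_cast hn2
                  linarith
                have hstep : b (n + 1) ≤ Real.sqrt (A / (((n+1:ℕ):ℝ) - d)) := by
                  simp only [hb, if_pos hdlt]; exact min_le_right _ _
                have hden : (u:ℝ) + 1 ≤ ((n+1:ℕ):ℝ) - d := by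
                  have : (u:ℝ) = (n:ℝ) - (k:ℝ) - 1 := by
                    rw [hu]; push_cast [Nat.cast_sub (by omega : k + 1 ≤ n)]; ring
                  push_cast
                  linarith
                have hpos : (0:ℝ) < (u:ℝ) + 1 := by positivity
                have hmon : A / (((n+1:ℕ):ℝ) - d) ≤ A / ((u:ℝ) + 1) :=
                  div_le_div_of_nonneg_left hA hpos hden
                have h2 : Real.sqrt (A / ((u:ℝ) + 1)) = sA / Real.sqrt ((u:ℝ) + 1) := by
                  rw [Real.sqrt_div hA]
                calc b (n + 1) ≤ Real.sqrt (A / (((n+1:ℕ):ℝ) - d)) := hstep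
                  _ ≤ Real.sqrt (A / ((u:ℝ) + 1)) := Real.sqrt_le_sqrt hmon
                  _ = sA * (1 / Real.sqrt ((u:ℝ) + 1)) := by rw [h2]; ring
                  _ ≤ sA * (2 * (Real.sqrt ((u:ℝ) + 1) - Real.sqrt u)) := by
                      apply mul_le_mul_of_nonneg_left (sqrt_helper2 u (by positivity)) hsA0
                  _ = 2 * sA * (Real.sqrt ((u:ℝ) + 1) - Real.sqrt u) := by ring
              push_cast at e1 e2 hbn ⊢
              linarith [e1, e2]
      calc ∑ t ∈ Finset.Icc 1 n, b t + b (n + 1) ≤ R n + b (n + 1) := by linarith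
        _ ≤ R (n + 1) := key
  have L2 : R T ≤ d + 2 * sA * Real.sqrt T := by
    have hsT : 0 ≤ Real.sqrt (T:ℝ) := Real.sqrt_nonneg _
    rcases lt_or_ge T (k + 1) with hT | hT
    · simp only [hR, if_neg (by omega : ¬ k + 1 ≤ T), if_neg (by omega : ¬ k + 2 ≤ T),
        Nat.sub_eq_zero_of_le (by omega : T ≤ k + 1)]
      simp only [Nat.cast_zero, Real.sqrt_zero]
      have : min ((T:ℝ)) ((k:ℝ)) ≤ (k:ℝ) := min_le_right _ _
      nlinarith
    · have hsub : Real.sqrt ((T - (k+1) : ℕ) : ℝ) ≤ Real.sqrt T := by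
        apply Real.sqrt_le_sqrt
        have : (T - (k+1) : ℕ) ≤ T := by omega
        exact_mod_cast this
      have hmin : min ((T:ℝ)) ((k:ℝ)) ≤ (k:ℝ) := min_le_right _ _
      rcases eq_or_lt_of_le hT with hT2 | hT2
      · -- T = k + 1
        have hT' : T = k + 1 := hT2.symm
        simp only [hR, if_pos hT, if_neg (by omega : ¬ k + 2 ≤ T),
          Nat.sub_eq_zero_of_le (by omega : T ≤ k + 1)]
        simp only [Nat.cast_zero, Real.sqrt_zero]
        have h1T : (1:ℝ) ≤ Real.sqrt T := by
          rw [show (1:ℝ) = Real.sqrt 1 by simp]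
          apply Real.sqrt_le_sqrt
          have : 1 ≤ T := by omega
          exact_mod_cast this
        nlinarith
      · simp only [hR, if_pos hT, if_pos (by omega : k + 2 ≤ T)]
        have h3 : min 1 sA ≤ sA := min_le_right _ _
        nlinarith
  -- assemble
  set S := (Finset.Icc 1 T).filter (fun t => ε₀ < w t) with hS
  have part2 : ∑ t ∈ S, w t ≤ d + 2 * Real.sqrt (3 * β * d * T) := by
    have h1 : ∑ t ∈ S, w t ≤ ∑ t ∈ S, b t := by
      apply Finset.sum_le_sum
      intro t ht
      rw [hS, Finset.mem_filter] at ht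
      exact hwb t ht.1 (lt_of_le_of_lt hε₀ ht.2)
    have h2 : ∑ t ∈ S, b t ≤ ∑ t ∈ Finset.Icc 1 T, b t :=
      Finset.sum_le_sum_of_subset_of_nonneg (Finset.filter_subset _ _)
        (fun i _ _ => hb0 i)
    have h3 : Real.sqrt (3 * β * d * (T:ℝ)) = sA * Real.sqrt T := by
      rw [hsA, hAdef, Real.sqrt_mul (by positivity)]
    rw [h3]
    calc ∑ t ∈ S, w t ≤ ∑ t ∈ Finset.Icc 1 T, b t := le_trans h1 h2
      _ ≤ R T := L1 T
      _ ≤ d + 2 * sA * Real.sqrt T := L2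
      _ = d + 2 * (sA * Real.sqrt T) := by ring
  constructor
  · have hsplit := Finset.sum_filter_add_sum_filter_not (Finset.Icc 1 T)
      (fun t => ε₀ < w t) w
    have hrest : ∑ t ∈ (Finset.Icc 1 T).filter (fun t => ¬ ε₀ < w t), w t ≤ T * ε₀ := by
      have hcard : ((Finset.Icc 1 T).filter (fun t => ¬ ε₀ < w t)).card ≤ T := by
        calc ((Finset.Icc 1 T).filter (fun t => ¬ ε₀ < w t)).card
            ≤ (Finset.Icc 1 T).card := Finset.card_filter_le _ _
          _ = T := by rw [Nat.card_Icc]; omega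
      calc ∑ t ∈ (Finset.Icc 1 T).filter (fun t => ¬ ε₀ < w t), w t
          ≤ ∑ t ∈ (Finset.Icc 1 T).filter (fun t => ¬ ε₀ < w t), ε₀ := by
            apply Finset.sum_le_sum
            intro t ht
            rw [Finset.mem_filter] at ht
            exact not_lt.mp ht.2
        _ = ((Finset.Icc 1 T).filter (fun t => ¬ ε₀ < w t)).card * ε₀ := by
            rw [Finset.sum_const, nsmul_eq_mul]
        _ ≤ T * ε₀ := by
            apply mul_le_mul_of_nonneg_right _ hε₀
            exact_mod_cast hcard
    calc ∑ t ∈ Finset.Icc 1 T, w t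
        = ∑ t ∈ S, w t + ∑ t ∈ (Finset.Icc 1 T).filter (fun t => ¬ ε₀ < w t), w t := by
          rw [hS, hsplit]
      _ ≤ (d + 2 * Real.sqrt (3 * β * d * T)) + T * ε₀ := add_le_add part2 hrest
  · exact part2
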